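/- Let A be a symmetric 5×5 real matrix and let e ∈ ℝ^5 be a unit vector. Then (tr A)·⟨Ae, e⟩ − ‖Ae‖² + ‖A‖_F² ≥ 0. -/
import Mathlib

set_option maxHeartbeats 4000000 in
/-- For a symmetric `5 × 5` real matrix `A` and a unit vector `e ∈ ℝ^5`,
`(tr A)⟨Ae, e⟩ − ‖Ae‖² + ‖A‖_F² ≥ 0`. -/
theorem stmt_1 (A : Matrix (Fin 5) (Fin 5) ℝ) (hA : A.IsSymm)
    (e : Fin 5 → ℝ) (he : ∑ i, e i ^ 2 = 1) :
    A.trace * (∑ i, A.mulVec e i * e i) - (∑ i, (A.mulVec e i) ^ 2)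
        + (∑ i, ∑ j, (A i j) ^ 2) ≥ 0 := by
  set v : Fin 5 → ℝ := A.mulVec e with hvdef
  set a : ℝ := ∑ i, v i * e i with ha
  set S : ℝ := ∑ i, v i ^ 2 with hS
  set F : ℝ := ∑ i, ∑ j, A i j ^ 2 with hF
  set H : ℝ := A.trace with hH
  have hv : ∀ i, v i = ∑ j, A i j * e j := by
    intro i; rw [hvdef]; rfl
  have hvE : ∀ i, v i = A i 0 * e 0 + A i 1 * e 1 + A i 2 * e 2 + A i 3 * e 3 + A i 4 * e 4 := by
    intro i; rw [hv i, Fin.sum_univ_five]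
  have he5 : e 0 ^ 2 + e 1 ^ 2 + e 2 ^ 2 + e 3 ^ 2 + e 4 ^ 2 = 1 := by
    simpa [Fin.sum_univ_five] using he
  have haE : a = v 0 * e 0 + v 1 * e 1 + v 2 * e 2 + v 3 * e 3 + v 4 * e 4 := by
    rw [ha, Fin.sum_univ_five]
  have hSE : S = v 0 ^ 2 + v 1 ^ 2 + v 2 ^ 2 + v 3 ^ 2 + v 4 ^ 2 := by
    rw [hS, Fin.sum_univ_five]
  have hFE : F = ∑ i, (A i 0 ^ 2 + A i 1 ^ 2 + A i 2 ^ 2 + A i 3 ^ 2 + A i 4 ^ 2) := by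
    rw [hF]; exact Finset.sum_congr rfl fun i _ => Fin.sum_univ_five _
  rw [Fin.sum_univ_five] at hFE
  have hHE : H = A 0 0 + A 1 1 + A 2 2 + A 3 3 + A 4 4 := by
    rw [hH, Matrix.trace, Fin.sum_univ_five]; rfl
  have hs10 : A 1 0 = A 0 1 := hA.apply 0 1
  have hs20 : A 2 0 = A 0 2 := hA.apply 0 2
  have hs21 : A 2 1 = A 1 2 := hA.apply 1 2
  have hs30 : A 3 0 = A 0 3 := hA.apply 0 3
  have hs31 : A 3 1 = A 1 3 := hA.apply 1 3
  have hs32 : A 3 2 = A 2 3 := hA.apply 2 3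
  have hs40 : A 4 0 = A 0 4 := hA.apply 0 4
  have hs41 : A 4 1 = A 1 4 := hA.apply 1 4
  have hs42 : A 4 2 = A 2 4 := hA.apply 2 4
  have hs43 : A 4 3 = A 3 4 := hA.apply 3 4
  set Bf : Fin 5 × Fin 5 → ℝ :=
    fun p => A p.1 p.2 - e p.1 * v p.2 - v p.1 * e p.2 + a * e p.1 * e p.2 with hBf
  set Pf : Fin 5 × Fin 5 → ℝ :=
    fun p => (if p.1 = p.2 then (1:ℝ) else 0) - e p.1 * e p.2 with hPf
  have hCS := Finset.sum_mul_sq_le_sq_mul_sq Finset.univ Bf Pf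
  have hP2 : ∑ p : Fin 5 × Fin 5, Pf p ^ 2 = 4 := by
    simp (config := { decide := true }) only [hPf, Fintype.sum_prod_type,
      Fin.sum_univ_five, if_true, if_false]
    linear_combination (e 0 ^ 2 + e 1 ^ 2 + e 2 ^ 2 + e 3 ^ 2 + e 4 ^ 2 - 1) * he5
  have hU : e 0 * (A 0 0 * v 0 + A 0 1 * v 1 + A 0 2 * v 2 + A 0 3 * v 3 + A 0 4 * v 4) + e 1 * (A 1 0 * v 0 + A 1 1 * v 1 + A 1 2 * v 2 + A 1 3 * v 3 + A 1 4 * v 4) + e 2 * (A 2 0 * v 0 + A 2 1 * v 1 + A 2 2 * v 2 + A 2 3 * v 3 + A 2 4 * v 4) + e 3 * (A 3 0 * v 0 + A 3 1 * v 1 + A 3 2 * v 2 + A 3 3 * v 3 + A 3 4 * v 4) + e 4 * (A 4 0 * v 0 + A 4 1 * v 1 + A 4 2 * v 2 + A 4 3 * v 3 + A 4 4 * v 4) = S := by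
    linear_combination
        ((-1:ℝ)) * hSE +
        ((-1:ℝ) * (A 0 1) * (e 1) + (-1:ℝ) * (A 0 2) * (e 2) + (-1:ℝ) * (A 0 3) * (e 3) + (-1:ℝ) * (A 0 4) * (e 4) + (A 1 0) * (e 1) + (A 2 0) * (e 2) + (A 3 0) * (e 3) + (A 4 0) * (e 4) + (-1:ℝ) * (v 0)) * (hvE 0) +
        ((A 0 1) * (e 0) + (-1:ℝ) * (A 1 0) * (e 0) + (-1:ℝ) * (A 1 2) * (e 2) + (-1:ℝ) * (A 1 3) * (e 3) + (-1:ℝ) * (A 1 4) * (e 4) + (A 2 1) * (e 2) + (A 3 1) * (e 3) + (A 4 1) * (e 4) + (-1:ℝ) * (v 1)) * (hvE 1) +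
        ((A 0 2) * (e 0) + (A 1 2) * (e 1) + (-1:ℝ) * (A 2 0) * (e 0) + (-1:ℝ) * (A 2 1) * (e 1) + (-1:ℝ) * (A 2 3) * (e 3) + (-1:ℝ) * (A 2 4) * (e 4) + (A 3 2) * (e 3) + (A 4 2) * (e 4) + (-1:ℝ) * (v 2)) * (hvE 2) +
        ((A 0 3) * (e 0) + (A 1 3) * (e 1) + (A 2 3) * (e 2) + (-1:ℝ) * (A 3 0) * (e 0) + (-1:ℝ) * (A 3 1) * (e 1) + (-1:ℝ) * (A 3 2) * (e 2) + (-1:ℝ) * (A 3 4) * (e 4) + (A 4 3) * (e 4) + (-1:ℝ) * (v 3)) * (hvE 3) +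
        ((A 0 4) * (e 0) + (A 1 4) * (e 1) + (A 2 4) * (e 2) + (A 3 4) * (e 3) + (-1:ℝ) * (A 4 0) * (e 0) + (-1:ℝ) * (A 4 1) * (e 1) + (-1:ℝ) * (A 4 2) * (e 2) + (-1:ℝ) * (A 4 3) * (e 3) + (-1:ℝ) * (v 4)) * (hvE 4) +
        ((A 0 0) * (e 0) * (e 1) + (A 0 1) * (e 1) ^ 2 + (A 0 2) * (e 1) * (e 2) + (A 0 3) * (e 1) * (e 3) + (A 0 4) * (e 1) * (e 4) + (-1:ℝ) * (A 1 0) * (e 0) ^ 2 + (-1:ℝ) * (A 1 1) * (e 0) * (e 1) + (-2:ℝ) * (A 1 2) * (e 0) * (e 2) + (-2:ℝ) * (A 1 3) * (e 0) * (e 3) + (-2:ℝ) * (A 1 4) * (e 0) * (e 4) + (A 2 1) * (e 0) * (e 2) + (A 3 1) * (e 0) * (e 3) + (A 4 1) * (e 0) * (e 4)) * hs10 +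
        ((A 0 0) * (e 0) * (e 2) + (A 0 1) * (e 1) * (e 2) + (A 0 2) * (e 2) ^ 2 + (A 0 3) * (e 2) * (e 3) + (A 0 4) * (e 2) * (e 4) + (A 1 2) * (e 0) * (e 1) + (-1:ℝ) * (A 2 0) * (e 0) ^ 2 + (-2:ℝ) * (A 2 1) * (e 0) * (e 1) + (-1:ℝ) * (A 2 2) * (e 0) * (e 2) + (-2:ℝ) * (A 2 3) * (e 0) * (e 3) + (-2:ℝ) * (A 2 4) * (e 0) * (e 4) + (A 3 2) * (e 0) * (e 3) + (A 4 2) * (e 0) * (e 4)) * hs20 +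
        ((A 0 1) * (e 0) * (e 2) + (-1:ℝ) * (A 0 2) * (e 0) * (e 1) + (A 1 1) * (e 1) * (e 2) + (A 1 2) * (e 2) ^ 2 + (A 1 3) * (e 2) * (e 3) + (A 1 4) * (e 2) * (e 4) + (-1:ℝ) * (A 2 1) * (e 1) ^ 2 + (-1:ℝ) * (A 2 2) * (e 1) * (e 2) + (-2:ℝ) * (A 2 3) * (e 1) * (e 3) + (-2:ℝ) * (A 2 4) * (e 1) * (e 4) + (A 3 2) * (e 1) * (e 3) + (A 4 2) * (e 1) * (e 4)) * hs21 +
        ((A 0 0) * (e 0) * (e 3) + (A 0 1) * (e 1) * (e 3) + (A 0 2) * (e 2) * (e 3) + (A 0 3) * (e 3) ^ 2 + (A 0 4) * (e 3) * (e 4) + (A 1 3) * (e 0) * (e 1) + (A 2 3) * (e 0) * (e 2) + (-1:ℝ) * (A 3 0) * (e 0) ^ 2 + (-2:ℝ) * (A 3 1) * (e 0) * (e 1) + (-2:ℝ) * (A 3 2) * (e 0) * (e 2) + (-1:ℝ) * (A 3 3) * (e 0) * (e 3) + (-2:ℝ) * (A 3 4) * (e 0) * (e 4) + (A 4 3) *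 (e 0) * (e 4)) * hs30 +
        ((A 0 1) * (e 0) * (e 3) + (-1:ℝ) * (A 0 3) * (e 0) * (e 1) + (A 1 1) * (e 1) * (e 3) + (A 1 2) * (e 2) * (e 3) + (A 1 3) * (e 3) ^ 2 + (A 1 4) * (e 3) * (e 4) + (A 2 3) * (e 1) * (e 2) + (-1:ℝ) * (A 3 1) * (e 1) ^ 2 + (-2:ℝ) * (A 3 2) * (e 1) * (e 2) + (-1:ℝ) * (A 3 3) * (e 1) * (e 3) + (-2:ℝ) * (A 3 4) * (e 1) * (e 4) + (A 4 3) * (e 1) * (e 4)) * hs31 +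
        ((A 0 2) * (e 0) * (e 3) + (-1:ℝ) * (A 0 3) * (e 0) * (e 2) + (A 1 2) * (e 1) * (e 3) + (-1:ℝ) * (A 1 3) * (e 1) * (e 2) + (A 2 2) * (e 2) * (e 3) + (A 2 3) * (e 3) ^ 2 + (A 2 4) * (e 3) * (e 4) + (-1:ℝ) * (A 3 2) * (e 2) ^ 2 + (-1:ℝ) * (A 3 3) * (e 2) * (e 3) + (-2:ℝ) * (A 3 4) * (e 2) * (e 4) + (A 4 3) * (e 2) * (e 4)) * hs32 +
        ((A 0 0) * (e 0) * (e 4) + (A 0 1) * (e 1) * (e 4) + (A 0 2) * (e 2) * (e 4) + (A 0 3) * (e 3) * (e 4) + (A 0 4) * (e 4) ^ 2 + (A 1 4) * (e 0) * (e 1) + (A 2 4) * (e 0) * (e 2) + (A 3 4) * (e 0) * (e 3) + (-1:ℝ) * (A 4 0) * (e 0) ^ 2 + (-2:ℝ) * (A 4 1) * (e 0) * (e 1) + (-2:ℝ) * (A 4 2) * (e 0) * (e 2) + (-2:ℝ) * (A 4 3) * (e 0) * (e 3) + (-1:ℝ) * (A 4 4) * (e 0) * (e 4)) * hs40 +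
        ((A 0 1) * (e 0) * (e 4) + (-1:ℝ) * (A 0 4) * (e 0) * (e 1) + (A 1 1) * (e 1) * (e 4) + (A 1 2) * (e 2) * (e 4) + (A 1 3) * (e 3) * (e 4) + (A 1 4) * (e 4) ^ 2 + (A 2 4) * (e 1) * (e 2) + (A 3 4) * (e 1) * (e 3) + (-1:ℝ) * (A 4 1) * (e 1) ^ 2 + (-2:ℝ) * (A 4 2) * (e 1) * (e 2) + (-2:ℝ) * (A 4 3) * (e 1) * (e 3) + (-1:ℝ) * (A 4 4) * (e 1) * (e 4)) * hs41 +
        ((A 0 2) * (e 0) * (e 4) + (-1:ℝ) * (A 0 4) * (e 0) * (e 2) + (A 1 2) * (e 1) * (e 4) + (-1:ℝ) * (A 1 4) * (e 1) * (e 2) + (A 2 2) * (e 2) * (e 4) + (A 2 3) * (e 3) * (e 4) + (A 2 4) * (e 4) ^ 2 + (A 3 4) * (e 2) * (e 3) + (-1:ℝ) * (A 4 2) * (e 2) ^ 2 + (-2:ℝ) * (A 4 3) * (e 2) * (e 3) + (-1:ℝ) * (A 4 4) * (e 2) * (e 4)) * hs42 +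
        ((A 0 3) * (e 0) * (e 4) + (-1:ℝ) * (A 0 4) * (e 0) * (e 3) + (A 1 3) * (e 1) * (e 4) + (-1:ℝ) * (A 1 4) * (e 1) * (e 3) + (A 2 3) * (e 2) * (e 4) + (-1:ℝ) * (A 2 4) * (e 2) * (e 3) + (A 3 3) * (e 3) * (e 4) + (A 3 4) * (e 4) ^ 2 + (-1:ℝ) * (A 4 3) * (e 3) ^ 2 + (-1:ℝ) * (A 4 4) * (e 3) * (e 4)) * hs43
  have row : ∀ i, (Bf (i, 0) ^ 2 + Bf (i, 1) ^ 2 + Bf (i, 2) ^ 2 + Bf (i, 3) ^ 2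
      + Bf (i, 4) ^ 2) = (A i 0 ^ 2 + A i 1 ^ 2 + A i 2 ^ 2 + A i 3 ^ 2 + A i 4 ^ 2) - 2 * e i * (A i 0 * v 0 + A i 1 * v 1 + A i 2 * v 2 + A i 3 * v 3 + A i 4 * v 4) - v i ^ 2 + 2 * a * (e i * v i) + e i ^ 2 * S - a ^ 2 * e i ^ 2 := by
    intro i
    simp only [hBf]
    linear_combination
        ((-1:ℝ) * (e i) ^ 2) * hSE +
        ((2:ℝ) * (A i 0) * (e 0) * (e i) + (2:ℝ) * (A i 1) * (e 1) * (e i) + (2:ℝ) * (A i 2) * (e 2) * (e i) + (2:ℝ) * (A i 3) * (e 3) * (e i) + (2:ℝ) * (A i 4) * (e 4) * (e i) + (a) * (e 0) ^ 2 * (e i) ^ 2 + (a) * (e 1) ^ 2 * (e i) ^ 2 + (a) * (e 2) ^ 2 * (e i) ^ 2 + (a) * (e 3) ^ 2 * (e i) ^ 2 + (a) * (e 4) ^ 2 * (e i) ^ 2 + (a) * (e i) ^ 2 + (e 0) * (e 1) ^ 2 * (v 0) * (e i) ^ 2 + (e 0) * (e 2) ^ 2 * (v 0) * (e i) ^ 2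 + (e 0) * (e 3) ^ 2 * (v 0) * (e i) ^ 2 + (e 0) * (e 4) ^ 2 * (v 0) * (e i) ^ 2 + (-1:ℝ) * (e 0) * (v 0) * (e i) ^ 2 + (e 0) ^ 2 * (e 1) * (v 1) * (e i) ^ 2 + (e 0) ^ 2 * (e 2) * (v 2) * (e i) ^ 2 + (e 0) ^ 2 * (e 3) * (v 3) * (e i) ^ 2 + (e 0) ^ 2 * (e 4) * (v 4) * (e i) ^ 2 + (-2:ℝ) * (e 0) ^ 2 * (e i) * (v i) + (e 0) ^ 3 * (v 0) * (e i) ^ 2 + (e 1) * (e 2) ^ 2 * (v 1) * (e i) ^ 2 + (e 1) * (e 3) ^ 2 * (v 1) * (e i) ^ 2 + (e 1) * (e 4) ^ 2 * (v 1) * (e i) ^ 2 + (-1:ℝ) * (e 1) * (v 1) * (e i) ^ 2 + (e 1) ^ 2 * (e 2) * (v 2) * (e i) ^ 2 + (e 1) ^ 2 * (e 3) * (v 3) * (e i) ^ 2 + (e 1) ^ 2 * (e 4) * (v 4) * (e i) ^ 2 + (-2:ℝ) * (e 1) ^ 2 * (e i) * (v i) + (e 1) ^ 3 * (v 1) * (e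 i) ^ 2 + (e 2) * (e 3) ^ 2 * (v 2) * (e i) ^ 2 + (e 2) * (e 4) ^ 2 * (v 2) * (e i) ^ 2 + (-1:ℝ) * (e 2) * (v 2) * (e i) ^ 2 + (e 2) ^ 2 * (e 3) * (v 3) * (e i) ^ 2 + (e 2) ^ 2 * (e 4) * (v 4) * (e i) ^ 2 + (-2:ℝ) * (e 2) ^ 2 * (e i) * (v i) + (e 2) ^ 3 * (v 2) * (e i) ^ 2 + (e 3) * (e 4) ^ 2 * (v 3) * (e i) ^ 2 + (-1:ℝ) * (e 3) * (v 3) * (e i) ^ 2 + (e 3) ^ 2 * (e 4) * (v 4) * (e i) ^ 2 + (-2:ℝ) * (e 3) ^ 2 * (e i) * (v i) + (e 3) ^ 3 * (v 3) * (e i) ^ 2 + (-1:ℝ) * (e 4) * (v 4) * (e i) ^ 2 + (-2:ℝ) * (e 4) ^ 2 * (e i) * (v i) + (e 4) ^ 3 * (v 4) * (e i) ^ 2 + (-2:ℝ) * (e i) * (v i)) * haE +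
        ((-1:ℝ) * (A i 0) * (e 0) + (A i 0) * (e 0) * (e 1) ^ 2 + (A i 0) * (e 0) * (e 2) ^ 2 + (A i 0) * (e 0) * (e 3) ^ 2 + (A i 0) * (e 0) * (e 4) ^ 2 + (A i 0) * (e 0) ^ 3 + (A i 1) * (e 0) ^ 2 * (e 1) + (-1:ℝ) * (A i 1) * (e 1) + (A i 1) * (e 1) * (e 2) ^ 2 + (A i 1) * (e 1) * (e 3) ^ 2 + (A i 1) * (e 1) * (e 4) ^ 2 + (A i 1) * (e 1) ^ 3 + (A i 2) * (e 0) ^ 2 * (e 2) + (A i 2) * (e 1) ^ 2 * (e 2) + (-1:ℝ) * (A i 2) * (e 2) + (A i 2) * (e 2) * (e 3) ^ 2 + (A i 2) * (e 2) * (e 4) ^ 2 + (A i 2) * (e 2) ^ 3 + (A i 3) * (e 0) ^ 2 * (e 3) + (A i 3) * (e 1) ^ 2 * (e 3) + (A i 3) * (e 2) ^ 2 * (e 3) + (-1:ℝ) * (A i 3) * (e 3) + (A i 3) * (e 3) * (e 4) ^ 2 + (A i 3) * (e 3) ^ 3 + (A i 4) * (e 0) ^ 2 * (e 4) + (A i 4)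 * (e 1) ^ 2 * (e 4) + (A i 4) * (e 2) ^ 2 * (e 4) + (A i 4) * (e 3) ^ 2 * (e 4) + (-1:ℝ) * (A i 4) * (e 4) + (A i 4) * (e 4) ^ 3 + (-2:ℝ) * (e 0) * (e 1) ^ 2 * (v 0) * (e i) + (-2:ℝ) * (e 0) * (e 2) ^ 2 * (v 0) * (e i) + (-2:ℝ) * (e 0) * (e 3) ^ 2 * (v 0) * (e i) + (-2:ℝ) * (e 0) * (e 4) ^ 2 * (v 0) * (e i) + (-2:ℝ) * (e 0) ^ 2 * (e 1) * (v 1) * (e i) + (-2:ℝ) * (e 0) ^ 2 * (e 2) * (v 2) * (e i) + (-2:ℝ) * (e 0) ^ 2 * (e 3) * (v 3) * (e i) + (-2:ℝ) * (e 0) ^ 2 * (e 4) * (v 4) * (e i) + (e 0) ^ 2 * (v i) + (-2:ℝ) * (e 0) ^ 3 * (v 0) * (e i) + (-2:ℝ) * (e 1) * (e 2) ^ 2 * (v 1) * (e i) + (-2:ℝ) * (e 1) * (e 3) ^ 2 * (v 1) * (e i) + (-2:ℝ) * (e 1) * (e 4) ^ 2 * (v 1) * (e i) + (-2:ℝ)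 * (e 1) ^ 2 * (e 2) * (v 2) * (e i) + (-2:ℝ) * (e 1) ^ 2 * (e 3) * (v 3) * (e i) + (-2:ℝ) * (e 1) ^ 2 * (e 4) * (v 4) * (e i) + (e 1) ^ 2 * (v i) + (-2:ℝ) * (e 1) ^ 3 * (v 1) * (e i) + (-2:ℝ) * (e 2) * (e 3) ^ 2 * (v 2) * (e i) + (-2:ℝ) * (e 2) * (e 4) ^ 2 * (v 2) * (e i) + (-2:ℝ) * (e 2) ^ 2 * (e 3) * (v 3) * (e i) + (-2:ℝ) * (e 2) ^ 2 * (e 4) * (v 4) * (e i) + (e 2) ^ 2 * (v i) + (-2:ℝ) * (e 2) ^ 3 * (v 2) * (e i) + (-2:ℝ) * (e 3) * (e 4) ^ 2 * (v 3) * (e i) + (-2:ℝ) * (e 3) ^ 2 * (e 4) * (v 4) * (e i) + (e 3) ^ 2 * (v i) + (-2:ℝ) * (e 3) ^ 3 * (v 3) * (e i) + (e 4) ^ 2 * (v i) + (-2:ℝ) * (e 4) ^ 3 * (v 4) * (e i) + (v i)) * (hvE i) +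
        ((2:ℝ) * (A i 0) * (A i 1) * (e 0) * (e 1) + (2:ℝ) * (A i 0) * (A i 2) * (e 0) * (e 2) + (2:ℝ) * (A i 0) * (A i 3) * (e 0) * (e 3) + (2:ℝ) * (A i 0) * (A i 4) * (e 0) * (e 4) + (-2:ℝ) * (A i 0) * (e 0) * (e 1) * (v 1) * (e i) + (-2:ℝ) * (A i 0) * (e 0) * (e 2) * (v 2) * (e i) + (-2:ℝ) * (A i 0) * (e 0) * (e 3) * (v 3) * (e i) + (-2:ℝ) * (A i 0) * (e 0) * (e 4) * (v 4) * (e i) + (-2:ℝ) * (A i 0) * (e 0) ^ 2 * (v 0) * (e i) + (A i 0) ^ 2 * (e 0) ^ 2 + (2:ℝ) * (A i 1) * (A i 2) * (e 1) * (e 2) + (2:ℝ) * (A i 1) * (A i 3) * (e 1) * (e 3) + (2:ℝ) * (A i 1) * (A i 4) * (e 1) * (e 4) + (-2:ℝ) * (A i 1) * (e 0) * (e 1) * (v 0) * (e i) + (-2:ℝ) * (A i 1) * (e 1) * (e 2) * (v 2) * (e i) + (-2:ℝ) * (A i 1) * (e 1) * (e 3) * (v 3) * (e i) + (-2:ℝ)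 * (A i 1) * (e 1) * (e 4) * (v 4) * (e i) + (-2:ℝ) * (A i 1) * (e 1) ^ 2 * (v 1) * (e i) + (A i 1) ^ 2 * (e 1) ^ 2 + (2:ℝ) * (A i 2) * (A i 3) * (e 2) * (e 3) + (2:ℝ) * (A i 2) * (A i 4) * (e 2) * (e 4) + (-2:ℝ) * (A i 2) * (e 0) * (e 2) * (v 0) * (e i) + (-2:ℝ) * (A i 2) * (e 1) * (e 2) * (v 1) * (e i) + (-2:ℝ) * (A i 2) * (e 2) * (e 3) * (v 3) * (e i) + (-2:ℝ) * (A i 2) * (e 2) * (e 4) * (v 4) * (e i) + (-2:ℝ) * (A i 2) * (e 2) ^ 2 * (v 2) * (e i) + (A i 2) ^ 2 * (e 2) ^ 2 + (2:ℝ) * (A i 3) * (A i 4) * (e 3) * (e 4) + (-2:ℝ) * (A i 3) * (e 0) * (e 3) * (v 0) * (e i) + (-2:ℝ) * (A i 3) * (e 1) * (e 3) * (v 1) * (e i) + (-2:ℝ) * (A i 3) * (e 2) * (e 3) * (v 2) * (e i) + (-2:ℝ) * (A i 3) * (e 3) * (e 4) * (v 4) * (e i) + (-2:ℝ) * (A i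 3) * (e 3) ^ 2 * (v 3) * (e i) + (A i 3) ^ 2 * (e 3) ^ 2 + (-2:ℝ) * (A i 4) * (e 0) * (e 4) * (v 0) * (e i) + (-2:ℝ) * (A i 4) * (e 1) * (e 4) * (v 1) * (e i) + (-2:ℝ) * (A i 4) * (e 2) * (e 4) * (v 2) * (e i) + (-2:ℝ) * (A i 4) * (e 3) * (e 4) * (v 3) * (e i) + (-2:ℝ) * (A i 4) * (e 4) ^ 2 * (v 4) * (e i) + (A i 4) ^ 2 * (e 4) ^ 2 + (2:ℝ) * (e 0) * (e 1) * (v 0) * (v 1) * (e i) ^ 2 + (2:ℝ) * (e 0) * (e 2) * (v 0) * (v 2) * (e i) ^ 2 + (2:ℝ) * (e 0) * (e 3) * (v 0) * (v 3) * (e i) ^ 2 + (2:ℝ) * (e 0) * (e 4) * (v 0) * (v 4) * (e i) ^ 2 + (e 0) ^ 2 * (v 0) ^ 2 * (e i) ^ 2 + (2:ℝ) * (e 1) * (e 2) * (v 1) * (v 2) * (e i) ^ 2 + (2:ℝ) * (e 1) * (e 3) * (v 1) * (v 3) * (e i) ^ 2 + (2:ℝ) * (e 1) * (e 4) * (v 1)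 * (v 4) * (e i) ^ 2 + (e 1) ^ 2 * (v 1) ^ 2 * (e i) ^ 2 + (2:ℝ) * (e 2) * (e 3) * (v 2) * (v 3) * (e i) ^ 2 + (2:ℝ) * (e 2) * (e 4) * (v 2) * (v 4) * (e i) ^ 2 + (e 2) ^ 2 * (v 2) ^ 2 * (e i) ^ 2 + (2:ℝ) * (e 3) * (e 4) * (v 3) * (v 4) * (e i) ^ 2 + (e 3) ^ 2 * (v 3) ^ 2 * (e i) ^ 2 + (e 4) ^ 2 * (v 4) ^ 2 * (e i) ^ 2) * he5
  have hQ : ∑ p : Fin 5 × Fin 5, Bf p ^ 2 = F - 2 * S + a ^ 2 := by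
    rw [Fintype.sum_prod_type]
    have step : ∀ i ∈ Finset.univ, (∑ j, Bf (i, j) ^ 2)
        = (A i 0 ^ 2 + A i 1 ^ 2 + A i 2 ^ 2 + A i 3 ^ 2 + A i 4 ^ 2) - 2 * e i * (A i 0 * v 0 + A i 1 * v 1 + A i 2 * v 2 + A i 3 * v 3 + A i 4 * v 4) - v i ^ 2 + 2 * a * (e i * v i) + e i ^ 2 * S - a ^ 2 * e i ^ 2 := by
      intro i _
      rw [Fin.sum_univ_five]
      exact row i
    rw [Finset.sum_congr rfl step, Fin.sum_univ_five]
    linear_combination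
        (-2:ℝ) * hU +
        ((-1:ℝ)) * hFE +
        ((e 0) ^ 2 + (e 1) ^ 2 + (e 2) ^ 2 + (e 3) ^ 2 + (e 4) ^ 2) * hSE +
        ((-1:ℝ) * (a) + (-1:ℝ) * (a) * (e 0) ^ 2 + (-1:ℝ) * (a) * (e 1) ^ 2 + (-1:ℝ) * (a) * (e 2) ^ 2 + (-1:ℝ) * (a) * (e 3) ^ 2 + (-1:ℝ) * (a) * (e 4) ^ 2 + (-1:ℝ) * (e 0) * (e 1) ^ 2 * (v 0) + (-1:ℝ) * (e 0) * (e 2) ^ 2 * (v 0) + (-1:ℝ) * (e 0) * (e 3) ^ 2 * (v 0) + (-1:ℝ) * (e 0) * (e 4) ^ 2 * (v 0) + (e 0) * (v 0) + (-1:ℝ) * (e 0) ^ 2 * (e 1) * (v 1) + (-1:ℝ) * (e 0) ^ 2 * (e 2) * (v 2) + (-1:ℝ) * (e 0) ^ 2 * (e 3) * (v 3) + (-1:ℝ) * (e 0) ^ 2 * (e 4) * (v 4) + (-1:ℝ) * (e 0) ^ 3 * (v 0) + (-1:ℝ) * (e 1) * (e 2) ^ 2 * (v 1) + (-1:ℝ)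 * (e 1) * (e 3) ^ 2 * (v 1) + (-1:ℝ) * (e 1) * (e 4) ^ 2 * (v 1) + (e 1) * (v 1) + (-1:ℝ) * (e 1) ^ 2 * (e 2) * (v 2) + (-1:ℝ) * (e 1) ^ 2 * (e 3) * (v 3) + (-1:ℝ) * (e 1) ^ 2 * (e 4) * (v 4) + (-1:ℝ) * (e 1) ^ 3 * (v 1) + (-1:ℝ) * (e 2) * (e 3) ^ 2 * (v 2) + (-1:ℝ) * (e 2) * (e 4) ^ 2 * (v 2) + (e 2) * (v 2) + (-1:ℝ) * (e 2) ^ 2 * (e 3) * (v 3) + (-1:ℝ) * (e 2) ^ 2 * (e 4) * (v 4) + (-1:ℝ) * (e 2) ^ 3 * (v 2) + (-1:ℝ) * (e 3) * (e 4) ^ 2 * (v 3) + (e 3) * (v 3) + (-1:ℝ) * (e 3) ^ 2 * (e 4) * (v 4) + (-1:ℝ) * (e 3) ^ 3 * (v 3) + (e 4) * (v 4) + (-1:ℝ) * (e 4) ^ 3 * (v 4)) * haE +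
        ((-2:ℝ) * (e 0) * (e 1) * (v 0) * (v 1) + (-2:ℝ) * (e 0) * (e 2) * (v 0) * (v 2) + (-2:ℝ) * (e 0) * (e 3) * (v 0) * (v 3) + (-2:ℝ) * (e 0) * (e 4) * (v 0) * (v 4) + (-1:ℝ) * (e 0) ^ 2 * (v 0) ^ 2 + (-2:ℝ) * (e 1) * (e 2) * (v 1) * (v 2) + (-2:ℝ) * (e 1) * (e 3) * (v 1) * (v 3) + (-2:ℝ) * (e 1) * (e 4) * (v 1) * (v 4) + (-1:ℝ) * (e 1) ^ 2 * (v 1) ^ 2 + (-2:ℝ) * (e 2) * (e 3) * (v 2) * (v 3) + (-2:ℝ) * (e 2) * (e 4) * (v 2) * (v 4) + (-1:ℝ) * (e 2) ^ 2 * (v 2) ^ 2 + (-2:ℝ) * (e 3) * (e 4) * (v 3) * (v 4) + (-1:ℝ) * (e 3) ^ 2 * (v 3) ^ 2 + (-1:ℝ) * (e 4) ^ 2 * (v 4) ^ 2 + (v 0) ^ 2 + (v 1) ^ 2 + (v 2) ^ 2 + (v 3) ^ 2 + (v 4) ^ 2) * he5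
  have hR : ∑ p : Fin 5 × Fin 5, Bf p * Pf p = H - a := by
    simp (config := { decide := true }) only [hBf, hPf, Fintype.sum_prod_type,
      Fin.sum_univ_five, if_true, if_false]
    linear_combination
        ((-1:ℝ)) * hHE +
        ((1:ℝ) + (e 0) ^ 2 + (-2:ℝ) * (e 0) ^ 2 * (e 1) ^ 2 + (-2:ℝ) * (e 0) ^ 2 * (e 2) ^ 2 + (-2:ℝ) * (e 0) ^ 2 * (e 3) ^ 2 + (-2:ℝ) * (e 0) ^ 2 * (e 4) ^ 2 + (-1:ℝ) * (e 0) ^ 4 + (e 1) ^ 2 + (-2:ℝ) * (e 1) ^ 2 * (e 2) ^ 2 + (-2:ℝ) * (e 1) ^ 2 * (e 3) ^ 2 + (-2:ℝ) * (e 1) ^ 2 * (e 4) ^ 2 + (-1:ℝ) * (e 1) ^ 4 + (e 2) ^ 2 + (-2:ℝ) * (e 2) ^ 2 * (e 3) ^ 2 + (-2:ℝ) * (e 2) ^ 2 * (e 4) ^ 2 + (-1:ℝ) * (e 2) ^ 4 + (e 3) ^ 2 + (-2:ℝ) * (e 3) ^ 2 * (e 4) ^ 2 + (-1:ℝ) *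 (e 3) ^ 4 + (e 4) ^ 2 + (-1:ℝ) * (e 4) ^ 4) * haE +
        ((-1:ℝ) * (e 0) + (3:ℝ) * (e 0) * (e 1) ^ 2 + (-2:ℝ) * (e 0) * (e 1) ^ 2 * (e 2) ^ 2 + (-2:ℝ) * (e 0) * (e 1) ^ 2 * (e 3) ^ 2 + (-2:ℝ) * (e 0) * (e 1) ^ 2 * (e 4) ^ 2 + (-1:ℝ) * (e 0) * (e 1) ^ 4 + (3:ℝ) * (e 0) * (e 2) ^ 2 + (-2:ℝ) * (e 0) * (e 2) ^ 2 * (e 3) ^ 2 + (-2:ℝ) * (e 0) * (e 2) ^ 2 * (e 4) ^ 2 + (-1:ℝ) * (e 0) * (e 2) ^ 4 + (3:ℝ) * (e 0) * (e 3) ^ 2 + (-2:ℝ) * (e 0) * (e 3) ^ 2 * (e 4) ^ 2 + (-1:ℝ) * (e 0) * (e 3) ^ 4 + (3:ℝ) * (e 0) * (e 4) ^ 2 + (-1:ℝ) * (e 0) * (e 4) ^ 4 + (3:ℝ) * (e 0) ^ 3 + (-2:ℝ) * (e 0) ^ 3 * (e 1) ^ 2 + (-2:ℝ) * (e 0) ^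 3 * (e 2) ^ 2 + (-2:ℝ) * (e 0) ^ 3 * (e 3) ^ 2 + (-2:ℝ) * (e 0) ^ 3 * (e 4) ^ 2 + (-1:ℝ) * (e 0) ^ 5) * (hvE 0) +
        ((3:ℝ) * (e 0) ^ 2 * (e 1) + (-2:ℝ) * (e 0) ^ 2 * (e 1) * (e 2) ^ 2 + (-2:ℝ) * (e 0) ^ 2 * (e 1) * (e 3) ^ 2 + (-2:ℝ) * (e 0) ^ 2 * (e 1) * (e 4) ^ 2 + (-2:ℝ) * (e 0) ^ 2 * (e 1) ^ 3 + (-1:ℝ) * (e 0) ^ 4 * (e 1) + (-1:ℝ) * (e 1) + (3:ℝ) * (e 1) * (e 2) ^ 2 + (-2:ℝ) * (e 1) * (e 2) ^ 2 * (e 3) ^ 2 + (-2:ℝ) * (e 1) * (e 2) ^ 2 * (e 4) ^ 2 + (-1:ℝ) * (e 1) * (e 2) ^ 4 + (3:ℝ) * (e 1) * (e 3) ^ 2 + (-2:ℝ) * (e 1) * (e 3) ^ 2 * (e 4) ^ 2 + (-1:ℝ) * (e 1) * (e 3) ^ 4 + (3:ℝ) * (e 1) * (e 4) ^ 2 + (-1:ℝ)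 * (e 1) * (e 4) ^ 4 + (3:ℝ) * (e 1) ^ 3 + (-2:ℝ) * (e 1) ^ 3 * (e 2) ^ 2 + (-2:ℝ) * (e 1) ^ 3 * (e 3) ^ 2 + (-2:ℝ) * (e 1) ^ 3 * (e 4) ^ 2 + (-1:ℝ) * (e 1) ^ 5) * (hvE 1) +
        ((-2:ℝ) * (e 0) ^ 2 * (e 1) ^ 2 * (e 2) + (3:ℝ) * (e 0) ^ 2 * (e 2) + (-2:ℝ) * (e 0) ^ 2 * (e 2) * (e 3) ^ 2 + (-2:ℝ) * (e 0) ^ 2 * (e 2) * (e 4) ^ 2 + (-2:ℝ) * (e 0) ^ 2 * (e 2) ^ 3 + (-1:ℝ) * (e 0) ^ 4 * (e 2) + (3:ℝ) * (e 1) ^ 2 * (e 2) + (-2:ℝ) * (e 1) ^ 2 * (e 2) * (e 3) ^ 2 + (-2:ℝ) * (e 1) ^ 2 * (e 2) * (e 4) ^ 2 + (-2:ℝ) * (e 1) ^ 2 * (e 2) ^ 3 + (-1:ℝ) * (e 1) ^ 4 * (e 2) + (-1:ℝ) * (e 2) + (3:ℝ) * (e 2) * (e 3) ^ 2 + (-2:ℝ)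 * (e 2) * (e 3) ^ 2 * (e 4) ^ 2 + (-1:ℝ) * (e 2) * (e 3) ^ 4 + (3:ℝ) * (e 2) * (e 4) ^ 2 + (-1:ℝ) * (e 2) * (e 4) ^ 4 + (3:ℝ) * (e 2) ^ 3 + (-2:ℝ) * (e 2) ^ 3 * (e 3) ^ 2 + (-2:ℝ) * (e 2) ^ 3 * (e 4) ^ 2 + (-1:ℝ) * (e 2) ^ 5) * (hvE 2) +
        ((-2:ℝ) * (e 0) ^ 2 * (e 1) ^ 2 * (e 3) + (-2:ℝ) * (e 0) ^ 2 * (e 2) ^ 2 * (e 3) + (3:ℝ) * (e 0) ^ 2 * (e 3) + (-2:ℝ) * (e 0) ^ 2 * (e 3) * (e 4) ^ 2 + (-2:ℝ) * (e 0) ^ 2 * (e 3) ^ 3 + (-1:ℝ) * (e 0) ^ 4 * (e 3) + (-2:ℝ) * (e 1) ^ 2 * (e 2) ^ 2 * (e 3) + (3:ℝ) * (e 1) ^ 2 * (e 3) + (-2:ℝ) * (e 1) ^ 2 * (e 3) * (e 4) ^ 2 + (-2:ℝ) * (e 1) ^ 2 * (e 3) ^ 3 + (-1:ℝ) * (e 1)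 ^ 4 * (e 3) + (3:ℝ) * (e 2) ^ 2 * (e 3) + (-2:ℝ) * (e 2) ^ 2 * (e 3) * (e 4) ^ 2 + (-2:ℝ) * (e 2) ^ 2 * (e 3) ^ 3 + (-1:ℝ) * (e 2) ^ 4 * (e 3) + (-1:ℝ) * (e 3) + (3:ℝ) * (e 3) * (e 4) ^ 2 + (-1:ℝ) * (e 3) * (e 4) ^ 4 + (3:ℝ) * (e 3) ^ 3 + (-2:ℝ) * (e 3) ^ 3 * (e 4) ^ 2 + (-1:ℝ) * (e 3) ^ 5) * (hvE 3) +
        ((-2:ℝ) * (e 0) ^ 2 * (e 1) ^ 2 * (e 4) + (-2:ℝ) * (e 0) ^ 2 * (e 2) ^ 2 * (e 4) + (-2:ℝ) * (e 0) ^ 2 * (e 3) ^ 2 * (e 4) + (3:ℝ) * (e 0) ^ 2 * (e 4) + (-2:ℝ) * (e 0) ^ 2 * (e 4) ^ 3 + (-1:ℝ) * (e 0) ^ 4 * (e 4) + (-2:ℝ) * (e 1) ^ 2 * (e 2) ^ 2 * (e 4) + (-2:ℝ) * (e 1) ^ 2 * (e 3) ^ 2 * (e 4) + (3:ℝ) *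 (e 1) ^ 2 * (e 4) + (-2:ℝ) * (e 1) ^ 2 * (e 4) ^ 3 + (-1:ℝ) * (e 1) ^ 4 * (e 4) + (-2:ℝ) * (e 2) ^ 2 * (e 3) ^ 2 * (e 4) + (3:ℝ) * (e 2) ^ 2 * (e 4) + (-2:ℝ) * (e 2) ^ 2 * (e 4) ^ 3 + (-1:ℝ) * (e 2) ^ 4 * (e 4) + (3:ℝ) * (e 3) ^ 2 * (e 4) + (-2:ℝ) * (e 3) ^ 2 * (e 4) ^ 3 + (-1:ℝ) * (e 3) ^ 4 * (e 4) + (-1:ℝ) * (e 4) + (3:ℝ) * (e 4) ^ 3 + (-1:ℝ) * (e 4) ^ 5) * (hvE 4) +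
        ((2:ℝ) * (A 0 0) * (e 0) ^ 2 + (-1:ℝ) * (A 0 0) * (e 0) ^ 2 * (e 1) ^ 2 + (-1:ℝ) * (A 0 0) * (e 0) ^ 2 * (e 2) ^ 2 + (-1:ℝ) * (A 0 0) * (e 0) ^ 2 * (e 3) ^ 2 + (-1:ℝ) * (A 0 0) * (e 0) ^ 2 * (e 4) ^ 2 + (-1:ℝ) * (A 0 0) * (e 0) ^ 4 + (2:ℝ) * (A 0 1) * (e 0) * (e 1) + (-1:ℝ) * (A 0 1) * (e 0) * (e 1) * (e 2) ^ 2 + (-1:ℝ) * (A 0 1) * (e 0) * (e 1) * (e 3) ^ 2 + (-1:ℝ) * (A 0 1) * (e 0) * (e 1) * (e 4) ^ 2 + (-1:ℝ) * (A 0 1) * (e 0) * (e 1) ^ 3 + (-1:ℝ) * (A 0 1) * (e 0) ^ 3 * (e 1) + (-1:ℝ) * (A 0 2) * (e 0) * (e 1) ^ 2 * (e 2) + (2:ℝ) * (A 0 2) * (e 0) * (e 2) + (-1:ℝ) * (A 0 2) * (e 0) * (e 2) * (e 3) ^ 2 + (-1:ℝ) * (A 0 2) * (e 0) * (e 2) *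 (e 4) ^ 2 + (-1:ℝ) * (A 0 2) * (e 0) * (e 2) ^ 3 + (-1:ℝ) * (A 0 2) * (e 0) ^ 3 * (e 2) + (-1:ℝ) * (A 0 3) * (e 0) * (e 1) ^ 2 * (e 3) + (-1:ℝ) * (A 0 3) * (e 0) * (e 2) ^ 2 * (e 3) + (2:ℝ) * (A 0 3) * (e 0) * (e 3) + (-1:ℝ) * (A 0 3) * (e 0) * (e 3) * (e 4) ^ 2 + (-1:ℝ) * (A 0 3) * (e 0) * (e 3) ^ 3 + (-1:ℝ) * (A 0 3) * (e 0) ^ 3 * (e 3) + (-1:ℝ) * (A 0 4) * (e 0) * (e 1) ^ 2 * (e 4) + (-1:ℝ) * (A 0 4) * (e 0) * (e 2) ^ 2 * (e 4) + (-1:ℝ) * (A 0 4) * (e 0) * (e 3) ^ 2 * (e 4) + (2:ℝ) * (A 0 4) * (e 0) * (e 4) + (-1:ℝ) * (A 0 4) * (e 0) * (e 4) ^ 3 + (-1:ℝ) * (A 0 4) * (e 0) ^ 3 * (e 4) + (2:ℝ) * (A 1 0) * (e 0) * (e 1) + (-1:ℝ) * (A 1 0) * (e 0) * (e 1) * (e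 2) ^ 2 + (-1:ℝ) * (A 1 0) * (e 0) * (e 1) * (e 3) ^ 2 + (-1:ℝ) * (A 1 0) * (e 0) * (e 1) * (e 4) ^ 2 + (-1:ℝ) * (A 1 0) * (e 0) * (e 1) ^ 3 + (-1:ℝ) * (A 1 0) * (e 0) ^ 3 * (e 1) + (-1:ℝ) * (A 1 1) * (e 0) ^ 2 * (e 1) ^ 2 + (2:ℝ) * (A 1 1) * (e 1) ^ 2 + (-1:ℝ) * (A 1 1) * (e 1) ^ 2 * (e 2) ^ 2 + (-1:ℝ) * (A 1 1) * (e 1) ^ 2 * (e 3) ^ 2 + (-1:ℝ) * (A 1 1) * (e 1) ^ 2 * (e 4) ^ 2 + (-1:ℝ) * (A 1 1) * (e 1) ^ 4 + (-1:ℝ) * (A 1 2) * (e 0) ^ 2 * (e 1) * (e 2) + (2:ℝ) * (A 1 2) * (e 1) * (e 2) + (-1:ℝ) * (A 1 2) * (e 1) * (e 2) * (e 3) ^ 2 + (-1:ℝ) * (A 1 2) * (e 1) * (e 2) * (e 4) ^ 2 + (-1:ℝ) * (A 1 2) * (e 1) * (e 2) ^ 3 + (-1:ℝ) * (A 1 2)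 * (e 1) ^ 3 * (e 2) + (-1:ℝ) * (A 1 3) * (e 0) ^ 2 * (e 1) * (e 3) + (-1:ℝ) * (A 1 3) * (e 1) * (e 2) ^ 2 * (e 3) + (2:ℝ) * (A 1 3) * (e 1) * (e 3) + (-1:ℝ) * (A 1 3) * (e 1) * (e 3) * (e 4) ^ 2 + (-1:ℝ) * (A 1 3) * (e 1) * (e 3) ^ 3 + (-1:ℝ) * (A 1 3) * (e 1) ^ 3 * (e 3) + (-1:ℝ) * (A 1 4) * (e 0) ^ 2 * (e 1) * (e 4) + (-1:ℝ) * (A 1 4) * (e 1) * (e 2) ^ 2 * (e 4) + (-1:ℝ) * (A 1 4) * (e 1) * (e 3) ^ 2 * (e 4) + (2:ℝ) * (A 1 4) * (e 1) * (e 4) + (-1:ℝ) * (A 1 4) * (e 1) * (e 4) ^ 3 + (-1:ℝ) * (A 1 4) * (e 1) ^ 3 * (e 4) + (-1:ℝ) * (A 2 0) * (e 0) * (e 1) ^ 2 * (e 2) + (2:ℝ) * (A 2 0) * (e 0) * (e 2) + (-1:ℝ) * (A 2 0) * (e 0) * (e 2) * (e 3) ^ 2 + (-1:ℝ) * (A 2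 0) * (e 0) * (e 2) * (e 4) ^ 2 + (-1:ℝ) * (A 2 0) * (e 0) * (e 2) ^ 3 + (-1:ℝ) * (A 2 0) * (e 0) ^ 3 * (e 2) + (-1:ℝ) * (A 2 1) * (e 0) ^ 2 * (e 1) * (e 2) + (2:ℝ) * (A 2 1) * (e 1) * (e 2) + (-1:ℝ) * (A 2 1) * (e 1) * (e 2) * (e 3) ^ 2 + (-1:ℝ) * (A 2 1) * (e 1) * (e 2) * (e 4) ^ 2 + (-1:ℝ) * (A 2 1) * (e 1) * (e 2) ^ 3 + (-1:ℝ) * (A 2 1) * (e 1) ^ 3 * (e 2) + (-1:ℝ) * (A 2 2) * (e 0) ^ 2 * (e 2) ^ 2 + (-1:ℝ) * (A 2 2) * (e 1) ^ 2 * (e 2) ^ 2 + (2:ℝ) * (A 2 2) * (e 2) ^ 2 + (-1:ℝ) * (A 2 2) * (e 2) ^ 2 * (e 3) ^ 2 + (-1:ℝ) * (A 2 2) * (e 2) ^ 2 * (e 4) ^ 2 + (-1:ℝ) * (A 2 2) * (e 2) ^ 4 + (-1:ℝ) * (A 2 3) * (e 0) ^ 2 * (e 2) * (e 3) + (-1:ℝ)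 * (A 2 3) * (e 1) ^ 2 * (e 2) * (e 3) + (2:ℝ) * (A 2 3) * (e 2) * (e 3) + (-1:ℝ) * (A 2 3) * (e 2) * (e 3) * (e 4) ^ 2 + (-1:ℝ) * (A 2 3) * (e 2) * (e 3) ^ 3 + (-1:ℝ) * (A 2 3) * (e 2) ^ 3 * (e 3) + (-1:ℝ) * (A 2 4) * (e 0) ^ 2 * (e 2) * (e 4) + (-1:ℝ) * (A 2 4) * (e 1) ^ 2 * (e 2) * (e 4) + (-1:ℝ) * (A 2 4) * (e 2) * (e 3) ^ 2 * (e 4) + (2:ℝ) * (A 2 4) * (e 2) * (e 4) + (-1:ℝ) * (A 2 4) * (e 2) * (e 4) ^ 3 + (-1:ℝ) * (A 2 4) * (e 2) ^ 3 * (e 4) + (-1:ℝ) * (A 3 0) * (e 0) * (e 1) ^ 2 * (e 3) + (-1:ℝ) * (A 3 0) * (e 0) * (e 2) ^ 2 * (e 3) + (2:ℝ) * (A 3 0) * (e 0) * (e 3) + (-1:ℝ) * (A 3 0) * (e 0) * (e 3) * (e 4) ^ 2 + (-1:ℝ) * (A 3 0) * (e 0) * (e 3) ^ 3 + (-1:ℝ)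 * (A 3 0) * (e 0) ^ 3 * (e 3) + (-1:ℝ) * (A 3 1) * (e 0) ^ 2 * (e 1) * (e 3) + (-1:ℝ) * (A 3 1) * (e 1) * (e 2) ^ 2 * (e 3) + (2:ℝ) * (A 3 1) * (e 1) * (e 3) + (-1:ℝ) * (A 3 1) * (e 1) * (e 3) * (e 4) ^ 2 + (-1:ℝ) * (A 3 1) * (e 1) * (e 3) ^ 3 + (-1:ℝ) * (A 3 1) * (e 1) ^ 3 * (e 3) + (-1:ℝ) * (A 3 2) * (e 0) ^ 2 * (e 2) * (e 3) + (-1:ℝ) * (A 3 2) * (e 1) ^ 2 * (e 2) * (e 3) + (2:ℝ) * (A 3 2) * (e 2) * (e 3) + (-1:ℝ) * (A 3 2) * (e 2) * (e 3) * (e 4) ^ 2 + (-1:ℝ) * (A 3 2) * (e 2) * (e 3) ^ 3 + (-1:ℝ) * (A 3 2) * (e 2) ^ 3 * (e 3) + (-1:ℝ) * (A 3 3) * (e 0) ^ 2 * (e 3) ^ 2 + (-1:ℝ) * (A 3 3) * (e 1) ^ 2 * (e 3) ^ 2 + (-1:ℝ) * (A 3 3) * (e 2) ^ 2 * (e 3)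 ^ 2 + (2:ℝ) * (A 3 3) * (e 3) ^ 2 + (-1:ℝ) * (A 3 3) * (e 3) ^ 2 * (e 4) ^ 2 + (-1:ℝ) * (A 3 3) * (e 3) ^ 4 + (-1:ℝ) * (A 3 4) * (e 0) ^ 2 * (e 3) * (e 4) + (-1:ℝ) * (A 3 4) * (e 1) ^ 2 * (e 3) * (e 4) + (-1:ℝ) * (A 3 4) * (e 2) ^ 2 * (e 3) * (e 4) + (2:ℝ) * (A 3 4) * (e 3) * (e 4) + (-1:ℝ) * (A 3 4) * (e 3) * (e 4) ^ 3 + (-1:ℝ) * (A 3 4) * (e 3) ^ 3 * (e 4) + (-1:ℝ) * (A 4 0) * (e 0) * (e 1) ^ 2 * (e 4) + (-1:ℝ) * (A 4 0) * (e 0) * (e 2) ^ 2 * (e 4) + (-1:ℝ) * (A 4 0) * (e 0) * (e 3) ^ 2 * (e 4) + (2:ℝ) * (A 4 0) * (e 0) * (e 4) + (-1:ℝ) * (A 4 0) * (e 0) * (e 4) ^ 3 + (-1:ℝ) * (A 4 0) * (e 0) ^ 3 * (e 4) + (-1:ℝ) * (A 4 1) * (e 0) ^ 2 * (e 1) * (e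 4) + (-1:ℝ) * (A 4 1) * (e 1) * (e 2) ^ 2 * (e 4) + (-1:ℝ) * (A 4 1) * (e 1) * (e 3) ^ 2 * (e 4) + (2:ℝ) * (A 4 1) * (e 1) * (e 4) + (-1:ℝ) * (A 4 1) * (e 1) * (e 4) ^ 3 + (-1:ℝ) * (A 4 1) * (e 1) ^ 3 * (e 4) + (-1:ℝ) * (A 4 2) * (e 0) ^ 2 * (e 2) * (e 4) + (-1:ℝ) * (A 4 2) * (e 1) ^ 2 * (e 2) * (e 4) + (-1:ℝ) * (A 4 2) * (e 2) * (e 3) ^ 2 * (e 4) + (2:ℝ) * (A 4 2) * (e 2) * (e 4) + (-1:ℝ) * (A 4 2) * (e 2) * (e 4) ^ 3 + (-1:ℝ) * (A 4 2) * (e 2) ^ 3 * (e 4) + (-1:ℝ) * (A 4 3) * (e 0) ^ 2 * (e 3) * (e 4) + (-1:ℝ) * (A 4 3) * (e 1) ^ 2 * (e 3) * (e 4) + (-1:ℝ) * (A 4 3) * (e 2) ^ 2 * (e 3) * (e 4) + (2:ℝ) * (A 4 3) * (e 3) * (e 4) + (-1:ℝ) * (A 4 3) * (e 3) * (e 4)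 ^ 3 + (-1:ℝ) * (A 4 3) * (e 3) ^ 3 * (e 4) + (-1:ℝ) * (A 4 4) * (e 0) ^ 2 * (e 4) ^ 2 + (-1:ℝ) * (A 4 4) * (e 1) ^ 2 * (e 4) ^ 2 + (-1:ℝ) * (A 4 4) * (e 2) ^ 2 * (e 4) ^ 2 + (-1:ℝ) * (A 4 4) * (e 3) ^ 2 * (e 4) ^ 2 + (2:ℝ) * (A 4 4) * (e 4) ^ 2 + (-1:ℝ) * (A 4 4) * (e 4) ^ 4) * he5
  rw [hR, hQ, hP2] at hCS
  have hSa := Finset.sum_mul_sq_le_sq_mul_sq Finset.univ v e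
  rw [he, ← ha, mul_one] at hSa
  have hS2 : a ^ 2 ≤ S := by
    calc a ^ 2 ≤ ∑ i, v i ^ 2 := hSa
    _ = S := (hS).symm
  linarith only [hCS, hS2, sq_nonneg (H + a)]
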